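/- Let g_M(G) denote the length of a shortest M-unbalanced circuit in G (∞ if none exists). If there exists an M-tension-continuous mapping from G to H, then g_M(G) ≥ g_M(H). -/

import Mathlib

/-- A directed graph on vertex type `V`, given by its adjacency relation. -/
structure Dgraph (V : Type) where
  Adj : V → V → Prop

namespace Dgraph

variable {V : Type}

/-- The type of edges of a directed graph. -/
def Edge (D : Dgraph V) : Type := {p : V × V // D.Adj p.1 p.2}

def src {D : Dgraph V} (e : D.Edge) : V := e.1.1
def tgt {D : Dgraph V} (e : D.Edge) : V := e.1.2

/-- A closed walk of length `n+1`: at step `i` the edge `e i` is traversed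
forwards (if `dir i`) or backwards, from `v i` to `v (i+1)` (cyclically). -/
def IsClosedWalk (D : Dgraph V) {n : ℕ} (v : Fin (n + 1) → V)
    (e : Fin (n + 1) → D.Edge) (dir : Fin (n + 1) → Bool) : Prop :=
  ∀ i, if dir i then src (e i) = v i ∧ tgt (e i) = v (i + 1)
    else tgt (e i) = v i ∧ src (e i) = v (i + 1)

/-- A circuit: a closed walk with pairwise distinct vertices. -/
def IsCircuit (D : Dgraph V) {n : ℕ} (v : Fin (n + 1) → V)
    (e : Fin (n + 1) → D.Edge) (dir : Fin (n + 1) → Bool) : Prop :=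
  D.IsClosedWalk v e dir ∧ Function.Injective v

/-- An `M`-tension: the signed sum along every circuit vanishes. -/
def IsTension {M : Type} [AddCommGroup M] (D : Dgraph V) (τ : D.Edge → M) : Prop :=
  ∀ (n : ℕ) (v : Fin (n + 1) → V) (e : Fin (n + 1) → D.Edge) (dir : Fin (n + 1) → Bool),
    D.IsCircuit v e dir → ∑ i, (if dir i then τ (e i) else -τ (e i)) = 0

/-- `f : E(G) → E(H)` is `M`-tension-continuous if it lifts `M`-tensions to
`M`-tensions. -/
def TensionContinuous (M : Type) [AddCommGroup M] {V W : Type}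
    (G : Dgraph V) (H : Dgraph W) (f : G.Edge → H.Edge) : Prop :=
  ∀ τ : H.Edge → M, H.IsTension τ → G.IsTension (τ ∘ f)

end Dgraph

/-- A circuit (given by its direction pattern) is `M`-balanced if
`(|C⁺| - |C⁻|) • m = 0` for every `m : M`. -/
def BalancedDir (M : Type) [AddCommGroup M] {n : ℕ} (dir : Fin (n + 1) → Bool) : Prop :=
  ∀ m : M, (((Finset.univ.filter fun i => dir i = true).card : ℤ) -
      ((Finset.univ.filter fun i => dir i = false).card : ℤ)) • m = 0

/-- `g_M(G)`: the length of a shortest `M`-unbalanced circuit of `G`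
(`⊤` if there is none). -/
noncomputable def gM (M : Type) [AddCommGroup M] {V : Type} (D : Dgraph V) : ℕ∞ :=
  sInf {N : ℕ∞ | ∃ (n : ℕ) (v : Fin (n + 1) → V) (e : Fin (n + 1) → D.Edge)
    (dir : Fin (n + 1) → Bool),
    D.IsCircuit v e dir ∧ ¬ BalancedDir M dir ∧ N = (n + 1 : ℕ)}


section AuxTC

open Dgraph
open Finset

variable {M : Type} [AddCommGroup M] {W : Type}
attribute [local instance] Classical.propDecidable

instance {D : Dgraph W} [Finite W] : Finite D.Edge := by
  unfold Dgraph.Edge; infer_instance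

noncomputable instance {D : Dgraph W} [Fintype W] : Fintype D.Edge := Fintype.ofFinite _

variable [Fintype W] {H : Dgraph W}

def sgn {n : ℕ} (dir : Fin (n+1) → Bool) (i : Fin (n+1)) : ℤ := if dir i then 1 else -1

lemma sum_shift {A : Type} [AddCommGroup A] {n : ℕ} (g : Fin (n+1) → A) :
    ∑ i : Fin (n+1), g (i + 1) = ∑ i, g i :=
  Fintype.sum_equiv (Equiv.addRight 1) _ _ (fun _ => rfl)

noncomputable def chainOf {n : ℕ} (e : Fin (n+1) → H.Edge) (dir : Fin (n+1) → Bool) :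
    H.Edge → ℤ := fun ε => ∑ i, if e i = ε then sgn dir i else 0

noncomputable def delta (ε : H.Edge) (w : W) : ℤ :=
  (if tgt ε = w then 1 else 0) - (if src ε = w then 1 else 0)

noncomputable def bdry (z : H.Edge → ℤ) (w : W) : ℤ := ∑ ε, z ε * delta ε w

-- L0 pattern
lemma chain_mul_sum {n : ℕ} (e : Fin (n+1) → H.Edge) (dir : Fin (n+1) → Bool)
    (c : H.Edge → ℤ) : ∑ ε, chainOf e dir ε * c ε = ∑ i, sgn dir i * c (e i) := by
  classical
  unfold chainOf
  simp only [sum_mul, ite_mul, zero_mul]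
  rw [Finset.sum_comm]
  refine Finset.sum_congr rfl fun i _ => ?_
  rw [Finset.sum_ite_eq]
  simp

lemma chain_sum {n : ℕ} (e : Fin (n+1) → H.Edge) (dir : Fin (n+1) → Bool) :
    ∑ ε, chainOf e dir ε = ∑ i, sgn dir i := by
  have := chain_mul_sum e dir (fun _ => 1)
  simpa using this

-- tension induced by a potential
lemma isTension_potential (p : W → M) :
    H.IsTension (fun ε => p (tgt ε) - p (src ε)) := by
  intro n v e dir ⟨hw, _⟩
  have key : ∀ i, (if dir i then p (tgt (e i)) - p (src (e i))
      else -(p (tgt (e i)) - p (src (e i)))) = p (v (i+1)) - p (v i) := by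
    intro i
    have h := hw i
    by_cases hd : dir i
    · rw [if_pos hd] at h ⊢; rw [h.1, h.2]
    · rw [if_neg hd] at h ⊢; rw [h.1, h.2]; abel
  calc ∑ i, (if dir i then p (tgt (e i)) - p (src (e i))
        else -(p (tgt (e i)) - p (src (e i))))
      = ∑ i, (p (v (i+1)) - p (v i)) := Finset.sum_congr rfl fun i _ => key i
    _ = (∑ i, p (v (i+1))) - ∑ i, p (v i) := Finset.sum_sub_distrib _ _
    _ = 0 := by rw [sum_shift (fun i => p (v i))]; exact sub_self _

-- boundary of the chain of a closed walk vanishes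
lemma bdry_chain_walk {n : ℕ} {v : Fin (n+1) → W} {e : Fin (n+1) → H.Edge}
    {dir : Fin (n+1) → Bool} (hw : H.IsClosedWalk v e dir) (w : W) :
    bdry (chainOf e dir) w = 0 := by
  unfold bdry
  rw [chain_mul_sum]
  have key : ∀ i, sgn dir i * delta (e i) w =
      (if v (i+1) = w then (1:ℤ) else 0) - (if v i = w then 1 else 0) := by
    intro i
    have h := hw i
    unfold sgn delta
    by_cases hd : dir i
    · rw [if_pos hd] at h ⊢; rw [h.1, h.2, one_mul]
    · rw [if_neg hd] at h ⊢; rw [h.1, h.2]; ring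
  calc ∑ i, sgn dir i * delta (e i) w
      = ∑ i, ((if v (i+1) = w then (1:ℤ) else 0) - (if v i = w then 1 else 0)) :=
        Finset.sum_congr rfl fun i _ => key i
    _ = 0 := by
        rw [Finset.sum_sub_distrib, sum_shift (fun i => if v i = w then (1:ℤ) else 0)]
        exact sub_self _

def Kset (M : Type) [AddCommGroup M] : AddSubgroup ℤ where
  carrier := {t | ∀ m : M, t • m = 0}
  zero_mem' := by intro m; simp
  add_mem' := by intro a b ha hb m; rw [add_smul]; simp [ha m, hb m]
  neg_mem' := by intro a ha m; rw [neg_smul]; simp [ha m]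

lemma mul_mem_Kset_left (c t : ℤ) (h : t ∈ Kset M) : c * t ∈ Kset (M := M) := by
  intro m; rw [mul_smul]; simp [h m]

lemma mul_mem_Kset_right (c t : ℤ) (h : t ∈ Kset M) : t * c ∈ Kset (M := M) := by
  rw [mul_comm]; exact mul_mem_Kset_left c t h

lemma delta_smul (p : W → M) (w : W) (m : M) (hp : p = fun u => if u = w then m else 0)
    (ε : H.Edge) : (delta ε w) • m = p (tgt ε) - p (src ε) := by
  subst hp
  unfold delta
  rw [sub_smul]
  congr 1 <;> split_ifs <;> simp_all <;> split_ifs <;> simp_all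

lemma sgn_delta_smul {n : ℕ} (dir : Fin (n+1) → Bool) (i : Fin (n+1))
    (p : W → M) (w : W) (m : M) (hp : p = fun u => if u = w then m else 0)
    (ε : H.Edge) :
    (sgn dir i * delta ε w) • m =
      (if dir i then p (tgt ε) - p (src ε) else -(p (tgt ε) - p (src ε))) := by
  unfold sgn
  by_cases hd : dir i
  · rw [if_pos hd, if_pos hd, one_mul, delta_smul p w m hp]
  · rw [if_neg hd, if_neg hd, neg_one_mul, neg_smul, delta_smul p w m hp]

lemma bdry_image_mem {V : Type} {G : Dgraph V} {f : G.Edge → H.Edge}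
    (hf : Dgraph.TensionContinuous M G H f) {n : ℕ} {v : Fin (n+1) → V}
    {e : Fin (n+1) → G.Edge} {dir : Fin (n+1) → Bool}
    (hc : G.IsCircuit v e dir) (w : W) :
    bdry (chainOf (fun i => f (e i)) dir) w ∈ Kset M := by
  intro m
  set p : W → M := (fun u => if u = w then m else 0) with hp
  have h0 := hf _ (isTension_potential p) n v e dir hc
  rw [bdry, chain_mul_sum, Finset.sum_smul]
  rw [← h0]
  exact Finset.sum_congr rfl fun i _ => sgn_delta_smul dir i p w m hp _
-- fragment appended to t2 context for testing
def IsPath (H : Dgraph W) (S : Finset H.Edge) (k : ℕ) : Prop :=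
  ∃ (v : Fin (k+1) → W) (e : Fin k → H.Edge),
    Function.Injective v ∧ ∀ i : Fin k, e i ∈ S ∧
      ((src (e i) = v i.castSucc ∧ tgt (e i) = v i.succ) ∨
       (tgt (e i) = v i.castSucc ∧ src (e i) = v i.succ))

lemma isPath_one {S : Finset H.Edge} (hS : S.Nonempty)
    (hloop : ∀ ε ∈ S, src ε ≠ tgt ε) : IsPath H S 1 := by
  obtain ⟨ε0, hε0⟩ := hS
  refine ⟨fun i => if i = 0 then src ε0 else tgt ε0, fun _ => ε0, ?_, ?_⟩
  · intro a b hab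
    have hne := hloop ε0 hε0
    fin_cases a <;> fin_cases b <;> simp_all
    exact hloop ε0 hε0 hab.symm
  · intro i
    have hi : i = 0 := Subsingleton.elim _ _
    subst hi
    refine ⟨hε0, Or.inl ⟨?_, ?_⟩⟩
    · simp
    · simp [Fin.ext_iff]

lemma isPath_bound {S : Finset H.Edge} {k : ℕ} (h : IsPath H S k) :
    k < Fintype.card W := by
  obtain ⟨v, e, hv, he⟩ := h
  have := Fintype.card_le_of_injective v hv
  simpa using this

set_option maxHeartbeats 1600000 in
lemma exists_circuit (S : Finset H.Edge) (hS : S.Nonempty)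
    (hloop : ∀ ε ∈ S, src ε ≠ tgt ε)
    (hdeg : ∀ w : W, (∃ ε ∈ S, src ε = w ∨ tgt ε = w) →
      ∃ ε₁ ∈ S, ∃ ε₂ ∈ S, ε₁ ≠ ε₂ ∧ (src ε₁ = w ∨ tgt ε₁ = w) ∧
        (src ε₂ = w ∨ tgt ε₂ = w)) :
    ∃ (n : ℕ) (v : Fin (n+1) → W) (e : Fin (n+1) → H.Edge) (dir : Fin (n+1) → Bool),
      H.IsCircuit v e dir ∧ Function.Injective e ∧ ∀ i, e i ∈ S := by
  classical
  have hP1 : IsPath H S 1 := isPath_one hS hloop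
  have hP1b : 1 ≤ Fintype.card W := le_of_lt (isPath_bound hP1)
  set N : ℕ := Nat.findGreatest (IsPath H S) (Fintype.card W) with hNdef
  have hPN : IsPath H S N := Nat.findGreatest_spec hP1b hP1
  have hN1 : 1 ≤ N := Nat.le_findGreatest hP1b hP1
  have hmax : ¬ IsPath H S (N+1) := by
    intro h
    have := Nat.le_findGreatest (le_of_lt (isPath_bound h)) h
    omega
  obtain ⟨N', hN'⟩ : ∃ k, N = k + 1 := ⟨N - 1, by omega⟩
  rw [hN'] at hPN hmax
  obtain ⟨v, e, hv, he⟩ := hPN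
  -- last vertex
  set w : W := v (Fin.last (N'+1)) with hw
  have hincl : src (e (Fin.last N')) = w ∨ tgt (e (Fin.last N')) = w := by
    rcases (he (Fin.last N')).2 with ⟨_, h2⟩ | ⟨_, h2⟩
    · right; rw [h2, Fin.succ_last]
    · left; rw [h2, Fin.succ_last]
  obtain ⟨ε₁, h1S, ε₂, h2S, hne, hi1, hi2⟩ :=
    hdeg w ⟨e (Fin.last N'), (he (Fin.last N')).1, hincl⟩
  -- choose an incident edge distinct from the last path edge
  obtain ⟨ε', hε'S, hε'ne, hε'inc⟩ :
      ∃ ε', ε' ∈ S ∧ ε' ≠ e (Fin.last N') ∧ (src ε' = w ∨ tgt ε' = w) := by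
    by_cases h : ε₁ = e (Fin.last N')
    · exact ⟨ε₂, h2S, by rw [← h]; exact fun hh => hne hh.symm, hi2⟩
    · exact ⟨ε₁, h1S, h, hi1⟩
  set u : W := if src ε' = w then tgt ε' else src ε' with hu_def
  have hu : (src ε' = w ∧ tgt ε' = u) ∨ (tgt ε' = w ∧ src ε' = u) := by
    by_cases h : src ε' = w
    · left; exact ⟨h, by rw [hu_def, if_pos h]⟩
    · right
      rcases hε'inc with h' | h'
      · exact absurd h' h
      · exact ⟨h', by rw [hu_def, if_neg h]⟩
  have huw : u ≠ w := by
    intro h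
    rcases hu with ⟨h1, h2⟩ | ⟨h1, h2⟩
    · exact hloop ε' hε'S (by rw [h1, h2, h])
    · exact hloop ε' hε'S (by rw [h1, h2, h])
  by_cases hur : ∃ j : Fin (N'+2), v j = u
  case neg =>
    -- extend the path, contradicting maximality
    exfalso
    apply hmax
    rw [show N' + 1 + 1 = (N'+1) + 1 from rfl]
    refine ⟨Fin.snoc v u, Fin.snoc e ε', ?_, ?_⟩
    · intro a b hab
      induction a using Fin.lastCases with
      | last =>
        induction b using Fin.lastCases with
        | last => rfl
        | cast b =>
          rw [Fin.snoc_last, Fin.snoc_castSucc] at hab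
          exact absurd ⟨b, hab.symm⟩ hur
      | cast a =>
        induction b using Fin.lastCases with
        | last =>
          rw [Fin.snoc_last, Fin.snoc_castSucc] at hab
          exact absurd ⟨a, hab⟩ hur
        | cast b =>
          rw [Fin.snoc_castSucc, Fin.snoc_castSucc] at hab
          rw [hv hab]
    · intro i
      induction i using Fin.lastCases with
      | last =>
        rw [Fin.snoc_last]
        refine ⟨hε'S, ?_⟩
        have hc : (Fin.snoc v u : Fin (N'+3) → W) (Fin.last (N'+1)).castSucc = w := by
          rw [Fin.snoc_castSucc]
        have hs : (Fin.snoc v u : Fin (N'+3) → W) (Fin.last (N'+1)).succ = u := by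
          rw [Fin.succ_last, Fin.snoc_last]
        rcases hu with ⟨h1, h2⟩ | ⟨h1, h2⟩
        · left; rw [hc, hs]; exact ⟨h1, h2⟩
        · right; rw [hc, hs]; exact ⟨h1, h2⟩
      | cast i =>
        rw [Fin.snoc_castSucc]
        refine ⟨(he i).1, ?_⟩
        have hc : (Fin.snoc v u : Fin (N'+3) → W) (Fin.castSucc i).castSucc = v i.castSucc := by
          rw [Fin.snoc_castSucc]
        have hs : (Fin.snoc v u : Fin (N'+3) → W) (Fin.castSucc i).succ = v i.succ := by
          rw [Fin.succ_castSucc, Fin.snoc_castSucc]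
        rw [hc, hs]
        exact (he i).2
  case pos =>
    obtain ⟨j0, hj0⟩ := hur
    clear hincl hi1 hi2 hne h1S h2S hdeg hS hP1 hP1b hmax hN1 hN' hNdef hε'inc
    clear_value N
    clear N
    have hj0L : (j0 : ℕ) ≤ N' := by
      have : j0 ≠ Fin.last (N'+1) := by
        intro h; exact huw (by rw [← hj0, h])
      have := Fin.val_lt_last this
      simp at this; omega
    -- distinct edges along the path
    have heInj : Function.Injective e := by
      intro x y hxy
      have hvv : ∀ (a b : Fin (N'+2)), v a = v b → (a : ℕ) = (b : ℕ) := by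
        intro a b h; rw [hv h]
      rcases (he x).2 with ⟨hx1, hx2⟩ | ⟨hx1, hx2⟩ <;>
        rcases (he y).2 with ⟨hy1, hy2⟩ | ⟨hy1, hy2⟩ <;>
        rw [hxy] at hx1 hx2 <;> apply Fin.ext
      · have h1 := hvv _ _ (hx1.symm.trans hy1)
        have h2 := hvv _ _ (hx2.symm.trans hy2)
        simp only [Fin.coe_castSucc, Fin.val_succ] at h1 h2
        omega
      · have h1 := hvv _ _ (hx1.symm.trans hy2)
        have h2 := hvv _ _ (hx2.symm.trans hy1)
        simp only [Fin.coe_castSucc, Fin.val_succ] at h1 h2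
        omega
      · have h1 := hvv _ _ (hx1.symm.trans hy2)
        have h2 := hvv _ _ (hx2.symm.trans hy1)
        simp only [Fin.coe_castSucc, Fin.val_succ] at h1 h2
        omega
      · have h1 := hvv _ _ (hx1.symm.trans hy1)
        have h2 := hvv _ _ (hx2.symm.trans hy2)
        simp only [Fin.coe_castSucc, Fin.val_succ] at h1 h2
        omega
    -- ε' is not a path edge
    have hex' : ∀ x : Fin (N'+1), e x ≠ ε' := by
      intro x hx
      by_cases hxl : x = Fin.last N'
      · rw [hxl] at hx; exact hε'ne hx.symm
      · have hxv : (x : ℕ) < N' := by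
          have := Fin.val_lt_last hxl; simpa using this
        have hwv : ∀ a : Fin (N'+2), v a = w → (a : ℕ) = N' + 1 := by
          intro a ha
          have : a = Fin.last (N'+1) := hv (ha.trans hw)
          simp [this]
        rcases hu with ⟨h1, _⟩ | ⟨h1, _⟩ <;> rcases (he x).2 with ⟨h2, h3⟩ | ⟨h2, h3⟩ <;>
          rw [hx] at h2 h3
        · have := hwv _ (h2.symm.trans h1)
          simp only [Fin.coe_castSucc] at this; omega
        · have := hwv _ (h3.symm.trans h1)
          simp only [Fin.val_succ] at this; omega
        · have := hwv _ (h3.symm.trans h1)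
          simp only [Fin.val_succ] at this; omega
        · have := hwv _ (h2.symm.trans h1)
          simp only [Fin.coe_castSucc] at this; omega
    set j : ℕ := (j0 : ℕ) with hjdef
    set m : ℕ := N' + 1 - j with hmdef
    have hjm : j + m = N' + 1 := by omega
    have hm1 : 1 ≤ m := by omega
    set idx : Fin (m+1) → Fin (N'+2) :=
      (fun i => ⟨j + (i : ℕ), by have := i.isLt; omega⟩) with hidx
    set e2 : Fin (N'+2) → H.Edge :=
      (fun x => if h : (x : ℕ) < N' + 1 then e ⟨(x : ℕ), h⟩ else ε') with he2
    have hE_lt : ∀ (i : Fin (m+1)) (h : (i : ℕ) < m),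
        e2 (idx i) = e ⟨j + (i : ℕ), by omega⟩ := by
      intro i h
      have hlt : ((idx i : Fin (N'+2)) : ℕ) < N' + 1 := by
        show j + (i : ℕ) < N' + 1; omega
      show (if h' : ((idx i : Fin (N'+2)) : ℕ) < N' + 1 then e ⟨((idx i : Fin (N'+2)) : ℕ), h'⟩ else ε') = _
      rw [dif_pos hlt]
    have hlastidx : ∀ (i : Fin (m+1)), ¬ ((i : ℕ) < m) → (i : ℕ) = m := by
      intro i h; have := i.isLt; omega
    have hE_last : ∀ (i : Fin (m+1)), ¬ ((i : ℕ) < m) → e2 (idx i) = ε' := by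
      intro i h
      have hlt : ¬ ((idx i : Fin (N'+2)) : ℕ) < N' + 1 := by
        show ¬ j + (i : ℕ) < N' + 1
        have := hlastidx i h
        omega
      show (if h' : ((idx i : Fin (N'+2)) : ℕ) < N' + 1 then e ⟨((idx i : Fin (N'+2)) : ℕ), h'⟩ else ε') = _
      rw [dif_neg hlt]
    have hvidx_last : ∀ (i : Fin (m+1)), ¬ ((i : ℕ) < m) → v (idx i) = w := by
      intro i h
      rw [hw]
      congr 1
      apply Fin.ext
      show j + (i : ℕ) = N' + 1
      have := hlastidx i h
      omega
    have hvidx0 : v (idx 0) = u := by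
      rw [← hj0]
      congr 1
    have hsucc_val : ∀ (i : Fin (m+1)), (i : ℕ) < m → ((i + 1 : Fin (m+1)) : ℕ) = (i : ℕ) + 1 := by
      intro i h
      rw [Fin.val_add_one_of_lt]
      rw [Fin.lt_iff_val_lt_val, Fin.val_last]
      exact h
    have hlast_succ : ∀ (i : Fin (m+1)), ¬ ((i : ℕ) < m) → (i + 1 : Fin (m+1)) = 0 := by
      intro i h
      have : i = Fin.last m := Fin.ext (by simpa using hlastidx i h)
      rw [this, Fin.last_add_one]
    refine ⟨m, fun i => v (idx i), fun i => e2 (idx i),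
      fun i => if src (e2 (idx i)) = v (idx i) then true else false, ⟨?_, ?_⟩, ?_, ?_⟩
    · -- closed walk
      intro i
      beta_reduce
      by_cases hi : (i : ℕ) < m
      · have hE := hE_lt i hi
        have hcs : (⟨j + (i : ℕ), by omega⟩ : Fin (N'+1)).castSucc = idx i := by
          apply Fin.ext
          show j + (i : ℕ) = j + (i : ℕ)
          rfl
        have hsc : (⟨j + (i : ℕ), by omega⟩ : Fin (N'+1)).succ = idx (i + 1) := by
          apply Fin.ext
          show j + (i : ℕ) + 1 = j + ((i + 1 : Fin (m+1)) : ℕ)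
          rw [hsucc_val i hi]
          omega
        have hdis := (he ⟨j + (i : ℕ), by omega⟩).2
        rw [hcs, hsc, ← hE] at hdis
        by_cases hsrc : src (e2 (idx i)) = v (idx i)
        · rw [if_pos hsrc, if_pos rfl]
          refine ⟨hsrc, ?_⟩
          rcases hdis with ⟨_, h2⟩ | ⟨h1, h2⟩
          · exact h2
          · exfalso
            have := hv (h2.symm.trans hsrc)
            have := congrArg Fin.val this
            simp only [hidx] at this
            rw [hsucc_val i hi] at this
            omega
        · rw [if_neg hsrc, if_neg (by simp)]
          rcases hdis with ⟨h1, h2⟩ | ⟨h1, h2⟩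
          · exact absurd h1 hsrc
          · exact ⟨h1, h2⟩
      · have hE := hE_last i hi
        have hvl := hvidx_last i hi
        have hv0 : v (idx (i + 1)) = u := by rw [hlast_succ i hi]; exact hvidx0
        rw [hE, hvl, hv0]
        rcases hu with ⟨h1, h2⟩ | ⟨h1, h2⟩
        · rw [if_pos h1, if_pos rfl]; exact ⟨h1, h2⟩
        · have hne' : ¬ src ε' = w := by rw [h2]; exact huw
          rw [if_neg hne', if_neg (by simp)]
          exact ⟨h1, h2⟩
    · -- injective vertices
      intro a b hab
      beta_reduce at hab
      have := congrArg Fin.val (hv hab)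
      simp only [hidx] at this
      apply Fin.ext; omega
    · -- injective edges
      intro a b hab
      beta_reduce at hab
      by_cases ha : (a : ℕ) < m <;> by_cases hb : (b : ℕ) < m
      · rw [hE_lt a ha, hE_lt b hb] at hab
        have := congrArg Fin.val (heInj hab)
        simp only at this
        apply Fin.ext; omega
      · rw [hE_lt a ha, hE_last b hb] at hab
        exact absurd hab (hex' _)
      · rw [hE_last a ha, hE_lt b hb] at hab
        exact absurd hab.symm (hex' _)
      · apply Fin.ext
        rw [hlastidx a ha, hlastidx b hb]
    · -- edges in S
      intro i
      beta_reduce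
      by_cases hi : (i : ℕ) < m
      · rw [hE_lt i hi]; exact (he _).1
      · rw [hE_last i hi]; exact hε'S

lemma balanced_iff {n : ℕ} (dir : Fin (n+1) → Bool) :
    BalancedDir M dir ↔ (∑ i, sgn dir i) ∈ Kset M := by
  classical
  have h : (∑ i, sgn dir i) = ((Finset.univ.filter fun i => dir i = true).card : ℤ) -
      ((Finset.univ.filter fun i => dir i = false).card : ℤ) := by
    unfold sgn
    rw [Finset.sum_ite, Finset.sum_const, Finset.sum_const]
    simp [sub_eq_add_neg]
  rw [h]; rfl

lemma one_not_mem_Kset (t : ℤ) (ht : t ∉ Kset M) : (1 : ℤ) ∉ Kset (M := M) := by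
  intro h1
  exact ht (by simpa using mul_mem_Kset_left t 1 h1)

lemma lemA : ∀ (c : ℕ) (z : H.Edge → ℤ),
    (univ.filter (fun ε => z ε ∉ Kset M)).card ≤ c →
    (∀ w, bdry z w ∈ Kset M) →
    (∑ ε, z ε) ∉ Kset M →
    ∃ (n : ℕ) (v : Fin (n+1) → W) (e : Fin (n+1) → H.Edge) (dir : Fin (n+1) → Bool),
      H.IsCircuit v e dir ∧ ¬ BalancedDir M dir ∧ n + 1 ≤ c := by
  intro c
  induction c with
  | zero =>
    intro z hcard hb hs
    exfalso
    apply hs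
    have hall : ∀ ε, z ε ∈ Kset M := by
      intro ε
      by_contra h
      have hmem : ε ∈ univ.filter (fun ε => z ε ∉ Kset M) := by
        simp only [mem_filter, mem_univ, true_and]; exact h
      have := Finset.card_pos.mpr ⟨ε, hmem⟩
      omega
    exact AddSubgroup.sum_mem _ (fun ε _ => hall ε)
  | succ c ih =>
    intro z hcard hb hs
    set S := univ.filter (fun ε => z ε ∉ Kset M) with hSdef
    have hSmem : ∀ ε, ε ∈ S ↔ z ε ∉ Kset M := by
      intro ε; rw [hSdef]; simp
    have hSne : S.Nonempty := by
      rw [Finset.nonempty_iff_ne_empty]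
      intro h
      apply hs
      refine AddSubgroup.sum_mem _ (fun ε _ => ?_)
      by_contra hz
      have : ε ∈ S := (hSmem ε).mpr hz
      rw [h] at this
      exact absurd this (Finset.notMem_empty ε)
    by_cases hloopex : ∃ ε ∈ S, src ε = tgt ε
    · obtain ⟨ε, hεS, hεloop⟩ := hloopex
      refine ⟨0, fun _ => src ε, fun _ => ε, fun _ => true, ⟨?_, ?_⟩, ?_, by omega⟩
      · intro i
        rw [if_pos rfl]
        exact ⟨rfl, hεloop.symm⟩
      · intro a b _
        apply Fin.ext
        have := a.isLt; have := b.isLt; omega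
      · intro hbal
        rw [balanced_iff] at hbal
        have h1 : (∑ i : Fin 1, sgn (fun _ => true) i) = 1 := by
          simp [sgn]
        rw [h1] at hbal
        exact one_not_mem_Kset _ hs hbal
    · push_neg at hloopex
      have hnoloop : ∀ ε ∈ S, src ε ≠ tgt ε := hloopex
      have hdeg : ∀ w : W, (∃ ε ∈ S, src ε = w ∨ tgt ε = w) →
          ∃ ε₁ ∈ S, ∃ ε₂ ∈ S, ε₁ ≠ ε₂ ∧ (src ε₁ = w ∨ tgt ε₁ = w) ∧
            (src ε₂ = w ∨ tgt ε₂ = w) := by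
        intro w hw
        by_contra hcon
        push_neg at hcon
        obtain ⟨ε0, hε0S, hε0inc⟩ := hw
        have hKterm : ∀ ε ∈ univ.erase ε0, z ε * delta ε w ∈ Kset M := by
          intro ε hε
          by_cases hεS : ε ∈ S
          · by_cases hinc : src ε = w ∨ tgt ε = w
            · have hc2 := hcon ε0 hε0S ε hεS (Ne.symm (Finset.ne_of_mem_erase hε)) hε0inc
              rcases hinc with h | h
              · exact absurd h hc2.1
              · exact absurd h hc2.2
            · push_neg at hinc
              have hδ0 : delta ε w = 0 := by
                unfold delta; rw [if_neg hinc.2, if_neg hinc.1]; ring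
              rw [hδ0, mul_zero]; exact zero_mem _
          · have hzK : z ε ∈ Kset M := by
              by_contra h
              exact hεS ((hSmem ε).mpr h)
            exact mul_mem_Kset_right _ _ hzK
        have hsum : bdry z w = z ε0 * delta ε0 w + ∑ ε ∈ univ.erase ε0, z ε * delta ε w := by
          rw [bdry, ← Finset.add_sum_erase _ _ (mem_univ ε0)]
        have h1 : z ε0 * delta ε0 w ∈ Kset M := by
          have hK1 := hb w
          rw [hsum] at hK1
          have h2 := AddSubgroup.sum_mem (Kset M) hKterm
          have := AddSubgroup.sub_mem _ hK1 h2
          simpa using this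
        have hδ : delta ε0 w = 1 ∨ delta ε0 w = -1 := by
          have hne := hnoloop ε0 hε0S
          by_cases hsrc : src ε0 = w <;> by_cases htgt : tgt ε0 = w
          · exact absurd (hsrc.trans htgt.symm) hne
          · right; unfold delta; rw [if_neg htgt, if_pos hsrc]; ring
          · left; unfold delta; rw [if_pos htgt, if_neg hsrc]; ring
          · rcases hε0inc with h | h
            · exact absurd h hsrc
            · exact absurd h htgt
        have hzK : z ε0 ∈ Kset M := by
          rcases hδ with h | h
          · rw [h, mul_one] at h1; exact h1
          · rw [h] at h1
            have := AddSubgroup.neg_mem _ h1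
            simpa using this
        exact ((hSmem ε0).mp hε0S) hzK
      obtain ⟨n, v, e, dir, hcirc, heinj, heS⟩ := exists_circuit S hSne hnoloop hdeg
      have hnS : n + 1 ≤ S.card := by
        have := Finset.card_le_card_of_injOn (s := (univ : Finset (Fin (n+1)))) (t := S) e (fun i _ => heS i) heinj.injOn
        simpa using this
      by_cases hbal : BalancedDir M dir
      · -- subtract the balanced circuit and recurse
        set zD := chainOf e dir with hzDdef
        set lam := z (e 0) * sgn dir 0 with hlam
        set z' := fun ε => z ε - lam * zD ε with hz'
        have hzD0 : zD (e 0) = sgn dir 0 := by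
          rw [hzDdef]
          show (∑ i, if e i = e 0 then sgn dir i else 0) = sgn dir 0
          rw [Finset.sum_eq_single 0]
          · rw [if_pos rfl]
          · intro b _ hbne
            exact if_neg (fun h => hbne (heinj h))
          · intro h; exact absurd (mem_univ _) h
        have hz'0 : z' (e 0) = 0 := by
          show z (e 0) - lam * zD (e 0) = 0
          rw [hzD0, hlam]
          have hsq : sgn dir 0 * sgn dir 0 = 1 := by
            unfold sgn; split_ifs <;> ring
          rw [mul_assoc, hsq, mul_one, sub_self]
        have hzDzero : ∀ ε, (∀ i, e i ≠ ε) → zD ε = 0 := by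
          intro ε h
          rw [hzDdef]
          show (∑ i, if e i = ε then sgn dir i else 0) = 0
          exact Finset.sum_eq_zero fun i _ => if_neg (h i)
        have hsupp' : univ.filter (fun ε => z' ε ∉ Kset M) ⊆ S.erase (e 0) := by
          intro ε hε
          simp only [mem_filter, mem_univ, true_and] at hε
          rw [Finset.mem_erase]
          constructor
          · intro h
            apply hε
            rw [h, hz'0]
            exact zero_mem _
          · by_cases hεS : ε ∈ S
            · exact hεS
            · exfalso
              have hzεK : z ε ∈ Kset M := by
                by_contra h; exact hεS ((hSmem ε).mpr h)
              have hDz : zD ε = 0 := by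
                apply hzDzero
                intro i h
                exact hεS (h ▸ heS i)
              apply hε
              show z ε - lam * zD ε ∈ Kset M
              rw [hDz, mul_zero, sub_zero]
              exact hzεK
        have hcard' : (univ.filter (fun ε => z' ε ∉ Kset M)).card ≤ c := by
          have h1 := Finset.card_le_card hsupp'
          have h2 : (S.erase (e 0)).card < S.card :=
            Finset.card_erase_lt_of_mem (heS 0)
          omega
        have hb' : ∀ w, bdry z' w ∈ Kset M := by
          intro w
          have hlin : bdry z' w = bdry z w - lam * bdry zD w := by
            rw [bdry, bdry, bdry, Finset.mul_sum, ← Finset.sum_sub_distrib]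
            exact Finset.sum_congr rfl fun ε _ => by show (z ε - lam * zD ε) * delta ε w = _; ring
          rw [hlin, bdry_chain_walk hcirc.1 w, mul_zero, sub_zero]
          exact hb w
        have hs' : (∑ ε, z' ε) ∉ Kset M := by
          have hsum' : (∑ ε, z' ε) = (∑ ε, z ε) - lam * (∑ ε, zD ε) := by
            rw [Finset.mul_sum, ← Finset.sum_sub_distrib]
          have hzDsum : (∑ ε, zD ε) ∈ Kset M := by
            rw [hzDdef, chain_sum]
            exact (balanced_iff dir).mp hbal
          intro hK
          apply hs
          have hid : (∑ ε, z ε) = (∑ ε, z' ε) + lam * (∑ ε, zD ε) := by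
            rw [hsum']; ring
          rw [hid]
          exact AddSubgroup.add_mem _ hK (mul_mem_Kset_left _ _ hzDsum)
        obtain ⟨n', v', e', dir', hc', hb2, hle⟩ := ih z' hcard' hb' hs'
        exact ⟨n', v', e', dir', hc', hb2, by omega⟩
      · exact ⟨n, v, e, dir, hcirc, hbal, by omega⟩

end AuxTC

/-- if there is an `M`-tension-continuous map from `G` to `H`,
then `g_M(G) ≥ g_M(H)`. -/
theorem gM_le_of_tensionContinuous {M : Type} [AddCommGroup M]
    {V W : Type} [Fintype V] [Fintype W]
    (G : Dgraph V) (H : Dgraph W)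
    (hex : ∃ f : G.Edge → H.Edge, Dgraph.TensionContinuous M G H f) :
    gM M H ≤ gM M G := by
  classical
  obtain ⟨f, hf⟩ := hex
  refine le_sInf ?_
  rintro N ⟨n, v, e, dir, hcirc, hbal, rfl⟩
  set z : H.Edge → ℤ := chainOf (fun i => f (e i)) dir with hz
  have hb : ∀ w, bdry z w ∈ Kset M := fun w => bdry_image_mem hf hcirc w
  have hs : (∑ ε, z ε) ∉ Kset M := by
    rw [hz, chain_sum]
    exact fun h => hbal ((balanced_iff dir).mpr h)
  have hcard : (Finset.univ.filter (fun ε => z ε ∉ Kset M)).card ≤ n + 1 := by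
    have hsub : Finset.univ.filter (fun ε => z ε ∉ Kset M) ⊆
        Finset.univ.image (fun i => f (e i)) := by
      intro ε hε
      simp only [Finset.mem_filter, Finset.mem_univ, true_and] at hε
      rw [Finset.mem_image]
      by_contra h
      push_neg at h
      apply hε
      have hz0 : z ε = 0 := by
        rw [hz]
        show (∑ i, if f (e i) = ε then sgn dir i else 0) = 0
        exact Finset.sum_eq_zero fun i _ => if_neg (h i (Finset.mem_univ i))
      rw [hz0]
      exact zero_mem _
    calc (Finset.univ.filter (fun ε => z ε ∉ Kset M)).card
        ≤ (Finset.univ.image (fun i => f (e i))).card := Finset.card_le_card hsub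
      _ ≤ (Finset.univ : Finset (Fin (n+1))).card := Finset.card_image_le
      _ = n + 1 := by simp
  obtain ⟨n', v', e', dir', hc', hb2, hle⟩ := lemA (n+1) z hcard hb hs
  have hmem : ((n' + 1 : ℕ) : ℕ∞) ∈ {N : ℕ∞ | ∃ (k : ℕ) (v : Fin (k + 1) → W)
      (e : Fin (k + 1) → H.Edge) (dir : Fin (k + 1) → Bool),
      H.IsCircuit v e dir ∧ ¬ BalancedDir M dir ∧ N = (k + 1 : ℕ)} :=
    ⟨n', v', e', dir', hc', hb2, rfl⟩
  calc gM M H ≤ ((n' + 1 : ℕ) : ℕ∞) := sInf_le hmem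
    _ ≤ ((n + 1 : ℕ) : ℕ∞) := by exact_mod_cast hle
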